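/- Let d_1, …, d_n be pairwise distinct real numbers with |d_j| < d for all j. With V_n(n) the (n+1)×n matrix of powers d_j^(i-1), i = 1,…,n+1, and V_n(n−1) the square Vandermonde matrix of powers i = 1,…,n, one has √(det(V_n(n)ᵀ V_n(n)) / det(V_n(n−1)ᵀ V_n(n−1))) ≤ (1 + d)^n. -/

import Mathlib

open Matrix

/-- The rectangular Vandermonde matrix `V_n(n)` with rows of powers `0,…,n`. -/
noncomputable def vandRect (n : ℕ) (d : Fin n → ℝ) : Matrix (Fin (n + 1)) (Fin n) ℝ :=
  Matrix.of fun i j => d j ^ (i : ℕ)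

/-- The square Vandermonde matrix `V_n(n-1)` with rows of powers `0,…,n-1`. -/
noncomputable def vandSq (n : ℕ) (d : Fin n → ℝ) : Matrix (Fin n) (Fin n) ℝ :=
  Matrix.of fun i j => d j ^ (i : ℕ)

open Polynomial Finset in
/-- If `|d_j| < d` for all `j`, the ratio of Gram determinants of `V_n(n)` and `V_n(n-1)`
is at most `(1+d)^n`. -/
theorem stmt_8 (n : ℕ) (hn : 0 < n) (dd : Fin n → ℝ) (hd : Function.Injective dd) (d : ℝ)
    (hbound : ∀ j, |dd j| < d) :
    Real.sqrt (((vandRect n dd)ᵀ * vandRect n dd).det / ((vandSq n dd)ᵀ * vandSq n dd).det) ≤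
      (1 + d) ^ n := by
  have hd0 : 0 ≤ d := le_trans (abs_nonneg _) (hbound ⟨0, hn⟩).le
  set W := vandSq n dd with hW
  set V := vandRect n dd with hV
  -- the polynomial with roots dd j
  set p : ℝ[X] := ∏ j : Fin n, (X - C (dd j)) with hp
  have hpdeg : p.natDegree = n := by
    rw [hp, natDegree_prod _ _ (fun i _ => X_sub_C_ne_zero (dd i))]
    simp
  have hmonic : p.Monic := monic_prod_of_monic _ _ fun i _ => monic_X_sub_C (dd i)
  have hcn : p.coeff n = 1 := by
    have := hmonic.leadingCoeff
    rwa [leadingCoeff, hpdeg] at this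
  set x : Fin n → ℝ := fun i => -(p.coeff i) with hx
  -- key interpolation identity
  have key : ∀ j : Fin n, ∑ i : Fin n, dd j ^ (i : ℕ) * x i = dd j ^ n := by
    intro j
    have hev : p.eval (dd j) = 0 := by
      rw [hp, eval_prod]
      exact Finset.prod_eq_zero (Finset.mem_univ j) (by simp)
    have h2 : p.eval (dd j) = ∑ i ∈ range (n + 1), p.coeff i * dd j ^ i :=
      eval_eq_sum_range' (by omega) (dd j)
    rw [Finset.sum_range_succ, hcn, one_mul] at h2
    have h3 : ∑ i ∈ range n, p.coeff i * dd j ^ i + dd j ^ n = 0 := by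
      rw [← h2, hev]
    have h4 : ∑ i : Fin n, p.coeff i * dd j ^ (i : ℕ) + dd j ^ n = 0 := by
      rwa [Fin.sum_univ_eq_sum_range (fun i => p.coeff i * dd j ^ i) n]
    have h5 : ∑ i : Fin n, dd j ^ (i:ℕ) * x i = -(∑ i : Fin n, p.coeff i * dd j ^ (i:ℕ)) := by
      rw [← Finset.sum_neg_distrib]
      exact Finset.sum_congr rfl fun i _ => by simp [hx]; ring
    rw [h5]
    linarith
  -- the rank-one update identity
  have hWx : Wᵀ * replicateCol Unit x = replicateCol Unit fun j => dd j ^ n := by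
    ext j u
    simp only [mul_apply, replicateCol_apply, transpose_apply, hW, vandSq, of_apply]
    exact key j
  have hxW : replicateRow Unit x * W = replicateRow Unit fun j => dd j ^ n := by
    ext u k
    simp only [mul_apply, replicateRow_apply, transpose_apply, hW, vandSq, of_apply]
    rw [← key k]
    exact Finset.sum_congr rfl fun i _ => mul_comm _ _
  have hM : Vᵀ * V = Wᵀ * ((1 + replicateCol Unit x * replicateRow Unit x) * W) := by
    have hexp : Wᵀ * ((1 + replicateCol Unit x * replicateRow Unit x) * W)
        = Wᵀ * W + (Wᵀ * replicateCol Unit x) * (replicateRow Unit x * W) := by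
      simp only [Matrix.add_mul, Matrix.one_mul, Matrix.mul_add, Matrix.mul_assoc]
    rw [hexp, hWx, hxW]
    ext j k
    simp only [Matrix.add_apply, mul_apply, transpose_apply, hV, hW, vandRect, vandSq, of_apply,
      replicateCol_apply, replicateRow_apply, Finset.univ_unique, Finset.sum_singleton]
    rw [Fin.sum_univ_castSucc]
    simp
  -- determinant of W is nonzero
  have hdetW : W.det ≠ 0 := by
    have : W = (Matrix.vandermonde dd)ᵀ := by
      ext i j; simp [hW, vandSq, Matrix.vandermonde]
    rw [this, det_transpose]
    exact det_vandermonde_ne_zero_iff.mpr hd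
  have hdetWW : (Wᵀ * W).det ≠ 0 := by
    rw [det_mul, det_transpose]
    exact mul_ne_zero hdetW hdetW
  -- compute the ratio
  have hratio : (Vᵀ * V).det / (Wᵀ * W).det = 1 + x ⬝ᵥ x := by
    rw [hM, det_mul, det_mul, det_transpose, det_one_add_replicateCol_mul_replicateRow]
    have : (Wᵀ * W).det = W.det * W.det := by rw [det_mul, det_transpose]
    rw [this]
    field_simp
  rw [hratio]
  -- bound the coefficients
  have hcoeff : ∀ i : Fin n, |x i| ≤ (n.choose (n - (i : ℕ))) * d ^ (n - (i : ℕ)) := by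
    intro i
    have hcard : Multiset.card (Finset.univ.val.map dd) = n := by simp
    have hcf : p.coeff i = (-1) ^ (n - (i : ℕ)) *
        Multiset.esymm (Finset.univ.val.map dd) (n - (i : ℕ)) := by
      have := Multiset.prod_X_sub_C_coeff (Finset.univ.val.map dd)
        (k := (i : ℕ)) (by rw [hcard]; exact i.isLt.le)
      rw [hcard] at this
      rw [hp, ← this, Multiset.map_map]
      rfl
    have hesym : Multiset.esymm (Finset.univ.val.map dd) (n - (i : ℕ))
        = ∑ t ∈ Finset.univ.powersetCard (n - (i : ℕ)), ∏ j ∈ t, dd j :=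
      Finset.esymm_map_val dd Finset.univ (n - (i : ℕ))
    have : |x i| = |Multiset.esymm (Finset.univ.val.map dd) (n - (i : ℕ))| := by
      rw [hx, abs_neg, hcf, abs_mul, abs_pow, abs_neg, abs_one, one_pow, one_mul]
    rw [this, hesym]
    calc |∑ t ∈ Finset.univ.powersetCard (n - (i : ℕ)), ∏ j ∈ t, dd j|
        ≤ ∑ t ∈ Finset.univ.powersetCard (n - (i : ℕ)), |∏ j ∈ t, dd j| :=
          Finset.abs_sum_le_sum_abs _ _
      _ ≤ ∑ t ∈ Finset.univ.powersetCard (n - (i : ℕ)), d ^ (n - (i : ℕ)) := by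
          refine Finset.sum_le_sum fun t ht => ?_
          have hct : t.card = n - (i : ℕ) := (Finset.mem_powersetCard.mp ht).2
          rw [Finset.abs_prod, ← hct, ← Finset.prod_const]
          exact Finset.prod_le_prod (fun j _ => abs_nonneg _) fun j _ => (hbound j).le
      _ = (n.choose (n - (i : ℕ))) * d ^ (n - (i : ℕ)) := by
          rw [Finset.sum_const, Finset.card_powersetCard, Finset.card_univ, Fintype.card_fin,
            nsmul_eq_mul]
  -- put it together
  have hs : ∀ i : Fin n, (0:ℝ) ≤ |x i| := fun i => abs_nonneg _
  have hsum_nonneg : (0:ℝ) ≤ ∑ i : Fin n, |x i| := Finset.sum_nonneg fun i _ => hs i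
  have h1 : Real.sqrt (1 + x ⬝ᵥ x) ≤ 1 + ∑ i : Fin n, |x i| := by
    have hsq : 1 + x ⬝ᵥ x ≤ (1 + ∑ i : Fin n, |x i|) ^ 2 := by
      have hxx : x ⬝ᵥ x = ∑ i : Fin n, |x i| ^ 2 := by
        simp [dotProduct, sq_abs, sq]
      rw [hxx]
      have h2 : ∑ i : Fin n, |x i| ^ 2 ≤ (∑ i : Fin n, |x i|) ^ 2 :=
        Finset.sum_sq_le_sq_sum_of_nonneg fun i _ => abs_nonneg _
      nlinarith [hsum_nonneg]
    calc Real.sqrt (1 + x ⬝ᵥ x) ≤ Real.sqrt ((1 + ∑ i : Fin n, |x i|) ^ 2) :=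
          Real.sqrt_le_sqrt hsq
      _ = 1 + ∑ i : Fin n, |x i| := Real.sqrt_sq (by linarith)
  refine h1.trans ?_
  have h2 : ∑ i : Fin n, |x i| ≤ ∑ i : Fin n, (n.choose (n - (i : ℕ))) * d ^ (n - (i : ℕ)) :=
    Finset.sum_le_sum fun i _ => hcoeff i
  have h3 : (1:ℝ) + ∑ i : Fin n, (n.choose (n - (i : ℕ))) * d ^ (n - (i : ℕ)) = (1 + d) ^ n := by
    rw [add_pow]
    simp only [one_pow, one_mul]
    rw [Finset.sum_range_succ]
    simp only [Nat.sub_self, pow_zero, Nat.choose_self, Nat.cast_one, mul_one, one_mul]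
    rw [add_comm, Fin.sum_univ_eq_sum_range
      (fun i => ((n.choose (n - i) : ℝ)) * d ^ (n - i)) n]
    congr 1
    refine Finset.sum_congr rfl fun k hk => ?_
    rw [Nat.choose_symm (Finset.mem_range.mp hk).le]
    ring
  linarith
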